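/- Let L = F_{p^l}, q = p^k with δ = gcd(k,l), and let f(x) = a x^{q+1} + b x^q + c x + d be a nonzero polynomial over L with a ≠ 0. Then the number of roots of f in L is 0, 1, 2, or p^δ + 1. -/

import Mathlib

open Finset

lemma gcd_pow_sub_one (p : ℕ) (hp : 2 ≤ p) :
    ∀ k l : ℕ, Nat.gcd (p ^ k - 1) (p ^ l - 1) = p ^ Nat.gcd k l - 1 := by
  intro k
  induction k using Nat.strong_induction_on with
  | _ k ih =>
    intro l
    rcases Nat.eq_zero_or_pos k with rfl | hk
    · simp
    · have hpk1 : 1 ≤ p ^ k := Nat.one_le_pow _ _ (by omega)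
      obtain ⟨s, hs⟩ : p ^ k - 1 ∣ (p ^ k) ^ (l / k) - 1 := by
        simpa using Nat.sub_dvd_pow_sub_pow (p ^ k) 1 (l / k)
      set Q := p ^ (l % k) with hQ
      have hQ1 : 1 ≤ Q := Nat.one_le_pow _ _ (by omega)
      have hRq1 : 1 ≤ (p ^ k) ^ (l / k) := Nat.one_le_pow _ _ (by omega)
      have hpl : p ^ l = (p ^ k) ^ (l / k) * Q := by
        rw [← pow_mul, ← pow_add, Nat.div_add_mod]
      have hkey : p ^ l - 1 = (Q - 1) + (Q * s) * (p ^ k - 1) := by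
        have h5 : Q * ((p ^ k) ^ (l / k) - 1) = Q * (p ^ k) ^ (l / k) - Q := by
          rw [Nat.mul_sub, mul_one]
        have h6 : Q ≤ Q * (p ^ k) ^ (l / k) := Nat.le_mul_of_pos_right _ (by omega)
        have h7 : Q * ((p ^ k) ^ (l / k) - 1) = Q * s * (p ^ k - 1) := by
          rw [hs]; ring
        rw [hpl, mul_comm ((p ^ k) ^ (l / k)) Q]
        omega
      rw [hkey, Nat.gcd_add_mul_right_right, Nat.gcd_rec k l,
        Nat.gcd_comm (p ^ k - 1), ih (l % k) (Nat.mod_lt _ hk) k]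

lemma card_fix (p k l : ℕ) (hp : p.Prime) (hk : 0 < k) (hl : 0 < l)
    (L : Type) [Field L] [Fintype L] [DecidableEq L] (hcard : Fintype.card L = p ^ l) :
    (Finset.univ.filter fun x : L => x ^ p ^ k = x).card = p ^ Nat.gcd k l := by
  set δ := Nat.gcd k l with hδ
  have hδ0 : 0 < δ := Nat.gcd_pos_of_pos_left _ hk
  have hδl : δ ∣ l := Nat.gcd_dvd_right _ _
  have hδk : δ ∣ k := Nat.gcd_dvd_left _ _
  have hiff : ∀ x : L, x ^ p ^ k = x ↔ x ^ p ^ δ = x := by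
    intro x
    constructor
    · intro h
      rcases eq_or_ne x 0 with rfl | hx
      · exact zero_pow (pow_ne_zero _ hp.pos.ne')
      · have hord1 : orderOf x ∣ p ^ k - 1 := by
          apply orderOf_dvd_of_pow_eq_one
          have h2 : x ^ (p ^ k - 1) * x = 1 * x := by
            rw [one_mul, ← pow_succ, Nat.sub_add_cancel (Nat.one_le_pow _ _ hp.pos)]
            exact h
          exact mul_right_cancel₀ hx h2
        have hord2 : orderOf x ∣ p ^ l - 1 := by
          apply orderOf_dvd_of_pow_eq_one
          have hcp : x ^ p ^ l = x := by rw [← hcard]; exact FiniteField.pow_card x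
          have h2 : x ^ (p ^ l - 1) * x = 1 * x := by
            rw [one_mul, ← pow_succ, Nat.sub_add_cancel (Nat.one_le_pow _ _ hp.pos)]
            exact hcp
          exact mul_right_cancel₀ hx h2
        have hgcd : orderOf x ∣ p ^ δ - 1 := by
          rw [hδ, ← gcd_pow_sub_one p hp.two_le k l]
          exact Nat.dvd_gcd hord1 hord2
        have h1 : x ^ (p ^ δ - 1) = 1 := by
          obtain ⟨t, ht⟩ := hgcd
          rw [ht, pow_mul, pow_orderOf_eq_one, one_pow]
        calc x ^ p ^ δ = x ^ (p ^ δ - 1) * x := by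
              rw [← pow_succ, Nat.sub_add_cancel (Nat.one_le_pow _ _ hp.pos)]
          _ = x := by rw [h1, one_mul]
    · intro h
      obtain ⟨t, ht⟩ := hδk
      have key : ∀ m : ℕ, x ^ (p ^ δ) ^ m = x := by
        intro m
        induction m with
        | zero => simp
        | succ m ihm => rw [pow_succ, pow_mul, ihm, h]
      rw [ht, pow_mul]
      exact key t
  have hfeq : (Finset.univ.filter fun x : L => x ^ p ^ k = x)
      = Finset.univ.filter fun x : L => x ^ p ^ δ = x := by
    ext z; simp [hiff]
  rw [hfeq]
  set M := p ^ δ - 1 with hMdef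
  have hpδ1 : 1 < p ^ δ := Nat.one_lt_pow hδ0.ne' hp.one_lt
  have hM1 : M + 1 = p ^ δ := Nat.sub_add_cancel (by omega)
  have hM0 : 0 < M := by omega
  have hMdvd : M ∣ p ^ l - 1 := by
    have := Nat.sub_dvd_pow_sub_pow (p ^ δ) 1 (l / δ)
    rwa [one_pow, ← pow_mul, Nat.mul_div_cancel' hδl] at this
  have hcu : Fintype.card Lˣ = p ^ l - 1 := by rw [Fintype.card_units, hcard]
  obtain ⟨g, hg⟩ := IsCyclic.exists_ofOrder_eq_natCard (α := Lˣ)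
  have hordg : orderOf (g : L) = p ^ l - 1 := by
    rw [orderOf_units, hg, Nat.card_eq_fintype_card, hcu]
  have hprim : IsPrimitiveRoot (g : L) (p ^ l - 1) := by
    have := IsPrimitiveRoot.orderOf (g : L)
    rwa [hordg] at this
  have hpl1 : 0 < p ^ l - 1 := by
    have : 1 < p ^ l := Nat.one_lt_pow hl.ne' hp.one_lt
    omega
  have hprimM : IsPrimitiveRoot ((g : L) ^ ((p ^ l - 1) / M)) M :=
    hprim.pow hpl1 (Nat.div_mul_cancel hMdvd).symm
  have hcardM : (Polynomial.nthRootsFinset M (1 : L)).card = M := hprimM.card_nthRootsFinset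
  have hseteq : (Finset.univ.filter fun x : L => x ^ p ^ δ = x)
      = insert (0 : L) (Polynomial.nthRootsFinset M (1 : L)) := by
    ext z
    simp only [Finset.mem_filter, Finset.mem_univ, true_and, Finset.mem_insert,
      Polynomial.mem_nthRootsFinset hM0]
    constructor
    · intro h
      rcases eq_or_ne z 0 with rfl | hz
      · exact Or.inl rfl
      · refine Or.inr ?_
        have h2 : z ^ M * z = 1 * z := by
          rw [one_mul, ← pow_succ, hM1]; exact h
        exact mul_right_cancel₀ hz h2
    · rintro (rfl | h)
      · exact zero_pow (pow_ne_zero _ hp.pos.ne')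
      · rw [← hM1, pow_succ, h, one_mul]
  rw [hseteq, Finset.card_insert_of_notMem, hcardM, hM1]
  intro h0
  rw [Polynomial.mem_nthRootsFinset hM0, zero_pow hM0.ne'] at h0
  exact zero_ne_one h0

lemma quad_three_roots {L : Type} [Field L] {A2 A1 A0 x0 x1 x2 : L}
    (h01 : x0 ≠ x1) (h02 : x0 ≠ x2) (h12 : x1 ≠ x2)
    (e0 : A2 * x0 ^ 2 + A1 * x0 + A0 = 0)
    (e1 : A2 * x1 ^ 2 + A1 * x1 + A0 = 0)
    (e2 : A2 * x2 ^ 2 + A1 * x2 + A0 = 0) : A2 = 0 := by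
  have k1 : (x0 - x1) * (A2 * (x0 + x1) + A1) = 0 := by linear_combination e0 - e1
  have k2 : (x0 - x2) * (A2 * (x0 + x2) + A1) = 0 := by linear_combination e0 - e2
  have k1' : A2 * (x0 + x1) + A1 = 0 :=
    (mul_eq_zero.mp k1).resolve_left (sub_ne_zero.mpr h01)
  have k2' : A2 * (x0 + x2) + A1 = 0 :=
    (mul_eq_zero.mp k2).resolve_left (sub_ne_zero.mpr h02)
  have k3 : (x1 - x2) * A2 = 0 := by linear_combination k1' - k2'
  exact (mul_eq_zero.mp k3).resolve_left (sub_ne_zero.mpr h12)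

theorem roots_of_projective_poly (p k l : ℕ) (hp : p.Prime) (hk : 0 < k) (hl : 0 < l)
    (L : Type) [Field L] [Fintype L] [DecidableEq L] (hcard : Fintype.card L = p ^ l)
    (a b c d : L) (ha : a ≠ 0) :
    (Finset.univ.filter fun x : L =>
        a * x ^ (p ^ k + 1) + b * x ^ (p ^ k) + c * x + d = 0).card ∈
      ({0, 1, 2, p ^ Nat.gcd k l + 1} : Set ℕ) := by
  classical
  haveI : Fact p.Prime := ⟨hp⟩
  haveI hchar : CharP L p := by
    haveI : CharP L (ringChar L) := ringChar.charP L
    have hrp : (ringChar L).Prime := CharP.char_is_prime L (ringChar L)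
    obtain ⟨n, _, hn⟩ := FiniteField.card L (ringChar L)
    have hpr : p = ringChar L := by
      have h1 : p ∣ (ringChar L) ^ (n : ℕ) := by
        rw [← hn, hcard]
        exact dvd_pow_self p hl.ne'
      exact ((Nat.prime_dvd_prime_iff_eq hp hrp).mp (hp.dvd_of_dvd_pow h1))
    rwa [hpr]
  set q := p ^ k with hqdef
  have hq0 : q ≠ 0 := pow_ne_zero _ hp.pos.ne'
  have hfrobS : ∀ x y : L, (x - y) ^ q = x ^ q - y ^ q := fun x y => sub_pow_char_pow x y k
  have hfrobinj : ∀ x y : L, x ^ q = y ^ q → x = y := by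
    intro x y h
    have h2 : (x - y) ^ q = 0 := by rw [hfrobS, h, sub_self]
    exact sub_eq_zero.mp (pow_eq_zero_iff hq0 |>.mp h2)
  set R := Finset.univ.filter (fun x : L =>
      a * x ^ (q + 1) + b * x ^ q + c * x + d = 0) with hRdef
  by_cases hcard2 : R.card ≤ 2
  · simp only [Set.mem_insert_iff, Set.mem_singleton_iff]
    omega
  · right; right; right
    -- pick three distinct roots
    have h3 : 2 < R.card := by omega
    obtain ⟨x1, hx1R⟩ : ∃ x, x ∈ R := Finset.card_pos.mp (by omega)
    have herase : 1 < (R.erase x1).card := by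
      have := Finset.card_erase_add_one hx1R
      omega
    obtain ⟨x0, hx0e, x2, hx2e, h02⟩ := Finset.one_lt_card.mp herase
    obtain ⟨h01, hx0R⟩ := Finset.mem_erase.mp hx0e
    obtain ⟨h21, hx2R⟩ := Finset.mem_erase.mp hx2e
    have h12 : x1 ≠ x2 := fun h => h21 h.symm
    have h20 : x2 ≠ x0 := fun h => h02 h.symm
    have h10 : x1 ≠ x0 := fun h => h01 h.symm
    -- Frobenius images distinct
    have hq01 : x0 ^ q ≠ x1 ^ q := fun h => h01 (hfrobinj _ _ h)
    have hq21 : x2 ^ q ≠ x1 ^ q := fun h => h21 (hfrobinj _ _ h)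
    have hq20 : x2 ^ q ≠ x0 ^ q := fun h => h20 (hfrobinj _ _ h)
    have hlam0 : x2 - x1 ≠ 0 := sub_ne_zero.mpr h21
    have hmu0 : x2 - x0 ≠ 0 := sub_ne_zero.mpr h20
    -- the bilinear form B
    have hB0 : a * x0 ^ (q + 1) + b * x0 ^ q + c * x0 + d = 0 :=
      (Finset.mem_filter.mp hx0R).2
    have hB1 : a * x1 ^ (q + 1) + b * x1 ^ q + c * x1 + d = 0 :=
      (Finset.mem_filter.mp hx1R).2
    have hB2 : a * x2 ^ (q + 1) + b * x2 ^ q + c * x2 + d = 0 :=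
      (Finset.mem_filter.mp hx2R).2
    set A := (x2 ^ q - x1 ^ q) * (x2 - x0) with hA
    set C := (x2 - x1) * (x2 ^ q - x0 ^ q) with hC
    have hA0 : A ≠ 0 := by rw [hA]; exact mul_ne_zero (sub_ne_zero.mpr hq21) hmu0
    -- B' vanishes at the three points
    have hB'0 : (x0 ^ q - x0 ^ q) * (x0 - x1) * A - (x0 ^ q - x1 ^ q) * (x0 - x0) * C = 0 := by
      ring
    have hB'1 : (x1 ^ q - x0 ^ q) * (x1 - x1) * A - (x1 ^ q - x1 ^ q) * (x1 - x0) * C = 0 := by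
      ring
    have hB'2 : (x2 ^ q - x0 ^ q) * (x2 - x1) * A - (x2 ^ q - x1 ^ q) * (x2 - x0) * C = 0 := by
      rw [hA, hC]; ring
    -- the linear relations
    have hlin0 : (a * (x0 * C - x1 * A) - (A - C) * b) * x0 ^ q
        + (a * (x1 ^ q * C - x0 ^ q * A) - (A - C) * c) * x0
        + (a * (x0 ^ q * x1 * A - x1 ^ q * x0 * C) - (A - C) * d) = 0 := by
      linear_combination a * hB'0 - (A - C) * hB0
    have hlin1 : (a * (x0 * C - x1 * A) - (A - C) * b) * x1 ^ q
        + (a * (x1 ^ q * C - x0 ^ q * A) - (A - C) * c) * x1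
        + (a * (x0 ^ q * x1 * A - x1 ^ q * x0 * C) - (A - C) * d) = 0 := by
      linear_combination a * hB'1 - (A - C) * hB1
    have hlin2 : (a * (x0 * C - x1 * A) - (A - C) * b) * x2 ^ q
        + (a * (x1 ^ q * C - x0 ^ q * A) - (A - C) * c) * x2
        + (a * (x0 ^ q * x1 * A - x1 ^ q * x0 * C) - (A - C) * d) = 0 := by
      linear_combination a * hB'2 - (A - C) * hB2
    set P := a * (x0 * C - x1 * A) - (A - C) * b with hP
    set Q := a * (x1 ^ q * C - x0 ^ q * A) - (A - C) * c with hQ2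
    set Rr := a * (x0 ^ q * x1 * A - x1 ^ q * x0 * C) - (A - C) * d with hRr
    -- quadratic relations eliminating x^q
    have hquad0 : (-(a * Q)) * x0 ^ 2 + (P * c - a * Rr - b * Q) * x0 + (P * d - b * Rr) = 0 := by
      linear_combination P * hB0 - (a * x0 + b) * hlin0
    have hquad1 : (-(a * Q)) * x1 ^ 2 + (P * c - a * Rr - b * Q) * x1 + (P * d - b * Rr) = 0 := by
      linear_combination P * hB1 - (a * x1 + b) * hlin1
    have hquad2 : (-(a * Q)) * x2 ^ 2 + (P * c - a * Rr - b * Q) * x2 + (P * d - b * Rr) = 0 := by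
      linear_combination P * hB2 - (a * x2 + b) * hlin2
    have haQ : -(a * Q) = 0 := quad_three_roots h01 h02 h12 hquad0 hquad1 hquad2
    have hQ0 : Q = 0 := by
      have h4 : a * Q = 0 := neg_eq_zero.mp haQ
      exact (mul_eq_zero.mp h4).resolve_left ha
    have hP0 : P = 0 := by
      have h5 : (x0 ^ q - x1 ^ q) * P = 0 := by
        linear_combination hlin0 - hlin1 - (x0 - x1) * hQ0
      exact (mul_eq_zero.mp h5).resolve_left (sub_ne_zero.mpr hq01)
    have hRr0 : Rr = 0 := by
      linear_combination hlin0 - x0 ^ q * hP0 - x0 * hQ0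
    -- A ≠ C
    have hAC : A ≠ C := by
      intro hAeq
      have h6 : (x0 - x1) * (a * A) = 0 := by
        linear_combination hP0 - hP + (a * x0 + b) * hAeq
      rcases mul_eq_zero.mp h6 with h7 | h7
      · exact h01 (sub_eq_zero.mp h7)
      · exact hA0 ((mul_eq_zero.mp h7).resolve_left ha)
    -- key characterization of roots
    have keyiff : ∀ x : L, (a * x ^ (q + 1) + b * x ^ q + c * x + d = 0) ↔
        (x ^ q - x0 ^ q) * (x - x1) * A - (x ^ q - x1 ^ q) * (x - x0) * C = 0 := by
      intro x
      constructor
      · intro h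
        have h2 : a * ((x ^ q - x0 ^ q) * (x - x1) * A - (x ^ q - x1 ^ q) * (x - x0) * C) = 0 := by
          linear_combination (A - C) * h + x ^ q * (hP0 - hP) + x * (hQ0 - hQ2) + (hRr0 - hRr)
        exact (mul_eq_zero.mp h2).resolve_left ha
      · intro h
        have h2 : (A - C) * (a * x ^ (q + 1) + b * x ^ q + c * x + d) = 0 := by
          linear_combination a * h - x ^ q * (hP0 - hP) - x * (hQ0 - hQ2) - (hRr0 - hRr)
        exact (mul_eq_zero.mp h2).resolve_left (sub_ne_zero.mpr hAC)
    -- the set of fixed points of Frobenius^k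
    set S := Finset.univ.filter (fun y : L => y ^ q = y) with hSdef
    have hScard : S.card = p ^ Nat.gcd k l := card_fix p k l hp hk hl L hcard
    -- bijection between R.erase x1 and S
    have hbij : (R.erase x1).card = S.card := by
      refine Finset.card_bij'
        (i := fun x _ => ((x - x0) * (x2 - x1)) / ((x - x1) * (x2 - x0)))
        (j := fun y _ => (x1 * (x2 - x0) * y - x0 * (x2 - x1)) / ((x2 - x0) * y - (x2 - x1)))
        ?_ ?_ ?_ ?_
      · -- i maps into S
        intro x hx
        obtain ⟨hxx1, hxR⟩ := Finset.mem_erase.mp hx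
        have hrx := (keyiff x).mp (Finset.mem_filter.mp hxR).2
        rw [hA, hC] at hrx
        have hd1 : (x - x1) * (x2 - x0) ≠ 0 := mul_ne_zero (sub_ne_zero.mpr hxx1) hmu0
        have hxq1 : x ^ q ≠ x1 ^ q := fun h => hxx1 (hfrobinj _ _ h)
        have hd2 : (x ^ q - x1 ^ q) * (x2 ^ q - x0 ^ q) ≠ 0 :=
          mul_ne_zero (sub_ne_zero.mpr hxq1) (sub_ne_zero.mpr hq20)
        rw [hSdef, Finset.mem_filter]
        refine ⟨Finset.mem_univ _, ?_⟩
        have hnum : ((x - x0) * (x2 - x1)) ^ q = (x ^ q - x0 ^ q) * (x2 ^ q - x1 ^ q) := by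
          rw [mul_pow, hfrobS, hfrobS]
        have hden : ((x - x1) * (x2 - x0)) ^ q = (x ^ q - x1 ^ q) * (x2 ^ q - x0 ^ q) := by
          rw [mul_pow, hfrobS, hfrobS]
        rw [div_pow, hnum, hden, div_eq_div_iff hd2 hd1]
        linear_combination hrx
      · -- j maps into R.erase x1
        intro y hy
        have hyq : y ^ q = y := (Finset.mem_filter.mp hy).2
        have hD : (x2 - x0) * y - (x2 - x1) ≠ 0 := by
          intro hD0
          have heq1 : (x2 - x0) * y = x2 - x1 := sub_eq_zero.mp hD0
          have heq2 : (x2 ^ q - x0 ^ q) * y = x2 ^ q - x1 ^ q := by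
            have := congrArg (fun z => z ^ q) heq1
            simpa only [mul_pow, hfrobS, hyq] using this
          apply hAC
          rw [hA, hC]
          linear_combination (x2 ^ q - x0 ^ q) * heq1 - (x2 - x0) * heq2
        have hDq : ((x2 - x0) * y - (x2 - x1)) ^ q
            = (x2 ^ q - x0 ^ q) * y - (x2 ^ q - x1 ^ q) := by
          rw [hfrobS, mul_pow, hfrobS, hfrobS, hyq]
        have hDqne : (x2 ^ q - x0 ^ q) * y - (x2 ^ q - x1 ^ q) ≠ 0 := by
          rw [← hDq]; exact pow_ne_zero _ hD
        have hjne : (x1 * (x2 - x0) * y - x0 * (x2 - x1)) / ((x2 - x0) * y - (x2 - x1)) ≠ x1 := by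
          intro hcon
          rw [div_eq_iff hD] at hcon
          have h8 : (x1 - x0) * (x2 - x1) = 0 := by linear_combination hcon
          rcases mul_eq_zero.mp h8 with h9 | h9
          · exact h10 (sub_eq_zero.mp h9)
          · exact hlam0 h9
        rw [Finset.mem_erase]
        refine ⟨hjne, ?_⟩
        rw [hRdef, Finset.mem_filter]
        refine ⟨Finset.mem_univ _, (keyiff _).mpr ?_⟩
        have hNq : (x1 * (x2 - x0) * y - x0 * (x2 - x1)) ^ q
            = x1 ^ q * (x2 ^ q - x0 ^ q) * y - x0 ^ q * (x2 ^ q - x1 ^ q) := by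
          rw [hfrobS, mul_pow, mul_pow, mul_pow, hfrobS, hfrobS, hyq]
        have hjq : ((x1 * (x2 - x0) * y - x0 * (x2 - x1)) / ((x2 - x0) * y - (x2 - x1))) ^ q
            = (x1 ^ q * (x2 ^ q - x0 ^ q) * y - x0 ^ q * (x2 ^ q - x1 ^ q))
              / ((x2 ^ q - x0 ^ q) * y - (x2 ^ q - x1 ^ q)) := by
          rw [div_pow, hNq, hDq]
        rw [hjq, hA, hC]
        rw [div_sub' hDqne, div_sub' hD, div_sub' hDqne, div_sub' hD, div_mul_div_comm,
          div_mul_div_comm, div_mul_eq_mul_div, div_mul_eq_mul_div, div_sub_div_same,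
          div_eq_zero_iff]
        left
        ring
      · -- left inverse
        intro x hx
        obtain ⟨hxx1, hxR⟩ := Finset.mem_erase.mp hx
        have hd1 : (x - x1) * (x2 - x0) ≠ 0 := mul_ne_zero (sub_ne_zero.mpr hxx1) hmu0
        have hval : (x2 - x0) * ((x - x0) * (x2 - x1) / ((x - x1) * (x2 - x0))) - (x2 - x1)
            = ((x2 - x1) * (x2 - x0) * (x1 - x0)) / ((x - x1) * (x2 - x0)) := by
          field_simp
          ring
        have hkey : (x2 - x0) * ((x - x0) * (x2 - x1) / ((x - x1) * (x2 - x0))) - (x2 - x1) ≠ 0 := by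
          rw [hval]
          exact div_ne_zero (mul_ne_zero (mul_ne_zero hlam0 hmu0) (sub_ne_zero.mpr h10)) hd1
        rw [div_eq_iff hkey]
        field_simp
        ring
      · -- right inverse
        intro y hy
        have hyq : y ^ q = y := (Finset.mem_filter.mp hy).2
        have hD : (x2 - x0) * y - (x2 - x1) ≠ 0 := by
          intro hD0
          have heq1 : (x2 - x0) * y = x2 - x1 := sub_eq_zero.mp hD0
          have heq2 : (x2 ^ q - x0 ^ q) * y = x2 ^ q - x1 ^ q := by
            have := congrArg (fun z => z ^ q) heq1
            simpa only [mul_pow, hfrobS, hyq] using this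
          apply hAC
          rw [hA, hC]
          linear_combination (x2 ^ q - x0 ^ q) * heq1 - (x2 - x0) * heq2
        have hjne : (x1 * (x2 - x0) * y - x0 * (x2 - x1)) / ((x2 - x0) * y - (x2 - x1)) ≠ x1 := by
          intro hcon
          rw [div_eq_iff hD] at hcon
          have h8 : (x1 - x0) * (x2 - x1) = 0 := by linear_combination hcon
          rcases mul_eq_zero.mp h8 with h9 | h9
          · exact h10 (sub_eq_zero.mp h9)
          · exact hlam0 h9
        have hne2 : ((x1 * (x2 - x0) * y - x0 * (x2 - x1)) / ((x2 - x0) * y - (x2 - x1)) - x1)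
            * (x2 - x0) ≠ 0 := mul_ne_zero (sub_ne_zero.mpr hjne) hmu0
        rw [div_eq_iff hne2]
        field_simp
        ring
    rw [Set.mem_singleton_iff, ← Finset.card_erase_add_one hx1R, hbij, hScard]
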